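/- The set {(a,b) ∈ 𝒪 × 𝒪 : σ(a) = a and σ(b·β) = b·β for every σ ∈ Gal(K/ℚ_p)} equals {(x, y·e) : x, y ∈ ℤ_p}. (Equivalently: the 𝔽_p^×-invariants of 𝒪[ε]/(ε² − β·ε), where u ∈ 𝔽_p^× acts by a + bε ↦ σ_u(a) + σ_u(b)·(σ_u(β)/β)·ε, form the subring ℤ_p[v]/(v² − p·v) with v = e·ε.) -/

import Mathlib

open Finset Polynomial

variable (p : ℕ) [hp : Fact p.Prime]

/-- The `ℤ_p`-algebra structure on any `ℚ_p`-algebra, via `ℤ_p → ℚ_p`. -/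
noncomputable instance zpAlgebra (K : Type*) [Field K] [Algebra ℚ_[p] K] :
    Algebra ℤ_[p] K :=
  ((algebraMap ℚ_[p] K).comp (algebraMap ℤ_[p] ℚ_[p])).toAlgebra

/-- Let `p` be an odd prime, `K = ℚ_p(ζ_p)` the `p`-th cyclotomic
extension of `ℚ_p`, `𝒪` the integral closure of `ℤ_p` in `K` (its ring of integers),
`ζ` a primitive `p`-th root of unity, `β := ζ·(ζ−1)` and `e := Φ_p'(ζ)`.
Then the set of pairs `(a,b) ∈ 𝒪 × 𝒪` with `a` and `b·β` fixed by every element of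
`Gal(K/ℚ_p)` equals `{(x, y·e) : x, y ∈ ℤ_p}`. -/
theorem stmt16 (hodd : p ≠ 2) (K : Type*) [Field K] [Algebra ℚ_[p] K]
    [IsCyclotomicExtension {p} ℚ_[p] K]
    (ζ : K) (hζ : IsPrimitiveRoot ζ p) :
    {x : K × K |
        x.1 ∈ integralClosure ℤ_[p] K ∧ x.2 ∈ integralClosure ℤ_[p] K ∧
        ∀ σ : K ≃ₐ[ℚ_[p]] K, σ x.1 = x.1 ∧ σ (x.2 * (ζ * (ζ - 1))) = x.2 * (ζ * (ζ - 1))} =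
    {x : K × K |
        ∃ a b : ℤ_[p], x.1 = algebraMap ℚ_[p] K (a : ℚ_[p]) ∧
          x.2 = algebraMap ℚ_[p] K (b : ℚ_[p]) *
            Polynomial.eval ζ (Polynomial.derivative (Polynomial.cyclotomic p K))} := by
  have hppos := hp.out.pos
  have hp1 := hp.out.one_lt
  haveI : IsScalarTower ℤ_[p] ℚ_[p] K := IsScalarTower.of_algebraMap_eq' rfl
  haveI hgal : IsGalois ℚ_[p] K := IsCyclotomicExtension.isGalois (S := {p}) (K := ℚ_[p]) (L := K)
  haveI hfd : FiniteDimensional ℚ_[p] K :=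
    IsCyclotomicExtension.finiteDimensional {p} ℚ_[p] K
  set A := integralClosure ℤ_[p] K with hA
  set e := Polynomial.eval ζ (Polynomial.derivative (Polynomial.cyclotomic p K)) with he
  have hζA : ζ ∈ A := ⟨X ^ p - C 1, monic_X_pow_sub_C 1 hppos.ne', by
    simp [eval₂_sub, hζ.pow_eq_one]⟩
  have hζ1 : ζ ≠ 1 := hζ.ne_one hp1
  have hζ0 : ζ ≠ 0 := fun h => by
    have := hζ.pow_eq_one
    rw [h, zero_pow hppos.ne'] at this
    exact zero_ne_one this
  have h1ζ : (1 : K) - ζ ≠ 0 := sub_ne_zero.2 (Ne.symm hζ1)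
  have hβ : ζ * (ζ - 1) ≠ 0 := mul_ne_zero hζ0 (sub_ne_zero.2 hζ1)
  -- fixed elements come from `ℚ_p`
  have hfix : ∀ x : K, (∀ σ : K ≃ₐ[ℚ_[p]] K, σ x = x) →
      ∃ c : ℚ_[p], algebraMap ℚ_[p] K c = x := by
    intro x hx
    have hmem : x ∈ IntermediateField.fixedField (⊤ : Subgroup (K ≃ₐ[ℚ_[p]] K)) :=
      fun g => hx g
    rw [← IntermediateField.fixingSubgroup_bot (F := ℚ_[p]) (E := K),
      IsGalois.fixedField_fixingSubgroup ⊥] at hmem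
    exact IntermediateField.mem_bot.1 hmem
  -- integral elements of `ℚ_p` come from `ℤ_p`
  have hdesc : ∀ c : ℚ_[p], IsIntegral ℤ_[p] (algebraMap ℚ_[p] K c) →
      ∃ y : ℤ_[p], (y : ℚ_[p]) = c := by
    intro c hc
    rw [isIntegral_algebraMap_iff ((algebraMap ℚ_[p] K).injective)] at hc
    obtain ⟨y, hy⟩ := IsIntegrallyClosed.isIntegral_iff.1 hc
    exact ⟨y, hy⟩
  -- Lemma A : e * β = p
  have heB : e * (ζ * (ζ - 1)) = algebraMap ℚ_[p] K ((p : ℕ) : ℚ_[p]) := by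
    have h1 := congrArg derivative (cyclotomic_prime_mul_X_sub_one K p)
    rw [derivative_mul, derivative_sub, derivative_X, derivative_one, derivative_sub,
      derivative_X_pow, derivative_one] at h1
    have h2 := congrArg (Polynomial.eval ζ) h1
    simp only [eval_add, eval_mul, eval_sub, eval_X, eval_one, eval_natCast, eval_pow,
      eval_C, sub_zero, mul_one] at h2
    rw [show Polynomial.eval ζ (cyclotomic p K) = 0 from hζ.isRoot_cyclotomic hppos,
      add_zero] at h2
    have h4 : ζ ^ (p - 1) * ζ = 1 := by
      rw [← pow_succ, Nat.sub_add_cancel hp1.le]; exact hζ.pow_eq_one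
    have h3 : e * (ζ * (ζ - 1)) = (p : K) * (ζ ^ (p - 1) * ζ) := by
      rw [he]; linear_combination ζ * h2
    rw [h3, h4, mul_one, map_natCast]
  -- e is integral
  have heA : e ∈ A := by
    rw [he, ← map_cyclotomic_int p K, derivative_map, eval_map, eval₂_eq_sum,
      Polynomial.sum_def]
    refine Subalgebra.sum_mem _ fun n _ => ?_
    exact Subalgebra.mul_mem _ (intCast_mem A _) (Subalgebra.pow_mem _ hζA _)
  -- geometric sums
  have hgs : ∀ (x : K) (n : ℕ), (1 - x) * ∑ k ∈ range n, x ^ k = 1 - x ^ n := fun x n => by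
    have := geom_sum_mul x n; linear_combination -this
  -- p as a product
  have hpprod : (p : K) = ∏ i ∈ Ico 1 p, (1 - ζ ^ i) := by
    have hcyc : cyclotomic p K = ∏ i ∈ Ico 1 p, (X - C (ζ ^ i)) := by
      have h0 : (X ^ p - C (1 : K)) = ∏ i ∈ Finset.range p, (X - C (ζ ^ i * 1)) :=
        X_pow_sub_C_eq_prod hζ hppos (one_pow p)
      simp only [mul_one] at h0
      have h1 : cyclotomic p K * (X - 1) = (∏ i ∈ Ico 1 p, (X - C (ζ ^ i))) * (X - 1) := by
        rw [cyclotomic_prime_mul_X_sub_one, ← C_1, h0, range_eq_Ico,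
          Finset.prod_eq_prod_Ico_succ_bot hppos]
        simp [mul_comm]
      have hX1 : (X - 1 : K[X]) ≠ 0 := by simpa using X_sub_C_ne_zero (1 : K)
      exact mul_right_cancel₀ hX1 h1
    have := congrArg (Polynomial.eval 1) hcyc
    rw [eval_one_cyclotomic_prime] at this
    simpa [eval_prod] using this
  -- Lemma B : (1 - ζ)^(p-1) is p times a unit of the ring of integers
  have hprod : ∃ u v : K, u ∈ A ∧ v ∈ A ∧ u * v = 1 ∧ (1 - ζ) ^ (p - 1) * u = (p : K) := by
    have key : ∀ i ∈ Finset.Ico 1 p, ∃ g g' : K, g ∈ A ∧ g' ∈ A ∧ g * g' = 1 ∧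
        (1 - ζ) * g = 1 - ζ ^ i := by
      intro i hi
      rw [Finset.mem_Ico] at hi
      have hcop : Nat.Coprime i p := Nat.Coprime.symm
        (hp.out.coprime_iff_not_dvd.2 fun hdvd => by
          have := Nat.le_of_dvd (by omega) hdvd; omega)
      obtain ⟨j, -, hj⟩ := Nat.exists_mul_mod_eq_one_of_coprime hcop hp1
      have hij : ζ ^ (i * j) = ζ := by
        conv_lhs => rw [← Nat.div_add_mod (i * j) p, hj]
        rw [pow_add, pow_mul, hζ.pow_eq_one, one_pow, pow_one, one_mul]
      refine ⟨∑ k ∈ range i, ζ ^ k, ∑ k ∈ range j, (ζ ^ i) ^ k,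
        Subalgebra.sum_mem _ fun k _ => Subalgebra.pow_mem _ hζA _,
        Subalgebra.sum_mem _ fun k _ => Subalgebra.pow_mem _ (Subalgebra.pow_mem _ hζA _) _,
        ?_, hgs ζ i⟩
      have h2 : (1 - ζ) * ((∑ k ∈ range i, ζ ^ k) * ∑ k ∈ range j, (ζ ^ i) ^ k)
          = (1 - ζ) * 1 := by
        rw [← mul_assoc, hgs ζ i, hgs (ζ ^ i) j, ← pow_mul, hij, mul_one]
      exact mul_left_cancel₀ h1ζ h2
    choose! g g' hg hg' hgg hgeq using key
    refine ⟨∏ i ∈ Ico 1 p, g i, ∏ i ∈ Ico 1 p, g' i,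
      Subalgebra.prod_mem _ fun i hi => hg i hi,
      Subalgebra.prod_mem _ fun i hi => hg' i hi, ?_, ?_⟩
    · rw [← Finset.prod_mul_distrib]
      exact Finset.prod_eq_one fun i hi => hgg i hi
    · rw [← Nat.card_Ico 1 p, ← Finset.prod_const, ← Finset.prod_mul_distrib, hpprod]
      exact Finset.prod_congr rfl fun i hi => hgeq i hi
  obtain ⟨u, v, huA, hvA, huv, hu⟩ := hprod
  have heven : Even (p - 1) := Nat.Odd.sub_odd (hp.out.odd_of_ne_two hodd) odd_one
  ext x
  simp only [Set.mem_setOf_eq]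
  constructor
  · rintro ⟨ha, hb, hσ⟩
    -- first coordinate
    obtain ⟨ca, hca⟩ := hfix x.1 fun σ => (hσ σ).1
    obtain ⟨a0, ha0⟩ := hdesc ca (by
      rw [hca]; exact (mem_integralClosure_iff _ _).1 ha)
    -- second coordinate
    obtain ⟨c, hc⟩ := hfix (x.2 * (ζ * (ζ - 1))) fun σ => (hσ σ).2
    have hbβA : x.2 * (ζ * (ζ - 1)) ∈ A := mul_mem hb (mul_mem hζA (sub_mem hζA (one_mem A)))
    obtain ⟨c0, hc0⟩ := hdesc c (by
      rw [hc]; exact (mem_integralClosure_iff _ _).1 hbβA)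
    have hsub : (ζ - 1) ^ (p - 1) = (p : K) * v := by
      rw [show (ζ - 1 : K) = -(1 - ζ) by ring, heven.neg_pow]
      calc (1 - ζ) ^ (p - 1) = (1 - ζ) ^ (p - 1) * (u * v) := by rw [huv, mul_one]
        _ = (1 - ζ) ^ (p - 1) * u * v := by ring
        _ = (p : K) * v := by rw [hu]
    have hmain : algebraMap ℚ_[p] K ((c0 : ℚ_[p]) ^ (p - 1)) =
        x.2 ^ (p - 1) * ζ ^ (p - 1) * v * algebraMap ℚ_[p] K ((p : ℕ) : ℚ_[p]) := by
      rw [map_pow, hc0, hc, map_natCast, mul_pow, mul_pow, hsub]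
      ring
    have hpQ : ((p : ℕ) : ℚ_[p]) ≠ 0 := Nat.cast_ne_zero.2 hppos.ne'
    have hpK : algebraMap ℚ_[p] K ((p : ℕ) : ℚ_[p]) ≠ 0 := fun h =>
      hpQ ((algebraMap ℚ_[p] K).injective (h.trans (map_zero _).symm))
    have hw : x.2 ^ (p - 1) * ζ ^ (p - 1) * v =
        algebraMap ℚ_[p] K ((c0 : ℚ_[p]) ^ (p - 1) * ((p : ℕ) : ℚ_[p])⁻¹) := by
      apply mul_right_cancel₀ hpK
      rw [← hmain, ← map_mul]
      congr 1
      field_simp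
    obtain ⟨d, hd⟩ := hdesc _ (by
      rw [← hw]
      exact (mem_integralClosure_iff _ _).1
        (mul_mem (mul_mem (pow_mem hb _) (pow_mem hζA _)) hvA))
    have hd2 : (d : ℚ_[p]) * ((p : ℕ) : ℚ_[p]) = ((c0 ^ (p - 1) : ℤ_[p]) : ℚ_[p]) := by
      push_cast
      rw [hd]
      field_simp
    have hd3 : d * (p : ℤ_[p]) = c0 ^ (p - 1) := by
      apply Subtype.coe_injective
      push_cast
      exact_mod_cast hd2
    have hdvd : (p : ℤ_[p]) ∣ c0 ^ (p - 1) := ⟨d, by rw [← hd3]; ring⟩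
    obtain ⟨d0, hd0⟩ := PadicInt.prime_p.dvd_of_dvd_pow hdvd
    refine ⟨a0, d0, ?_, ?_⟩
    · rw [ha0]; exact hca.symm
    · have h5 : x.2 * (ζ * (ζ - 1)) = algebraMap ℚ_[p] K (c0 : ℚ_[p]) := by rw [hc0, hc]
      have haux : algebraMap ℚ_[p] K (c0 : ℚ_[p]) =
          algebraMap ℚ_[p] K ((p : ℕ) : ℚ_[p]) * algebraMap ℚ_[p] K (d0 : ℚ_[p]) := by
        rw [← map_mul]
        congr 1
        rw [hd0]
        push_cast
        ring
      refine mul_right_cancel₀ hβ ?_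
      rw [h5, haux, ← heB]
      ring
  · rintro ⟨a, b, h1, h2⟩
    refine ⟨?_, ?_, fun σ => ⟨?_, ?_⟩⟩
    · rw [h1, ← PadicInt.algebraMap_apply, ← IsScalarTower.algebraMap_apply]
      exact (mem_integralClosure_iff _ _).2 (isIntegral_algebraMap)
    · rw [h2]
      refine mul_mem ?_ heA
      rw [← PadicInt.algebraMap_apply, ← IsScalarTower.algebraMap_apply]
      exact (mem_integralClosure_iff _ _).2 isIntegral_algebraMap
    · rw [h1]; exact σ.commutes _
    · rw [h2, mul_assoc, heB, ← map_mul]; exact σ.commutes _
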